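/- Let s, z₀, z₁, y₀, y₁ : α be pairwise distinct and set tS = Finsupp.single s 1, t₀ = Finsupp.single z₀ 1 + 2 • Finsupp.single y₀ 1, tZ = Finsupp.single z₀ 1 + Finsupp.single z₁ 1, t₁ = Finsupp.single z₁ 1 + 2 • Finsupp.single y₁ 1 in α →₀ ℕ. Then: (i) for each ε : Bool there exists a quadruple (hS, h₀, hZ, h₁) of functional signed multisets with forget hS = tS, forget h₀ = t₀, forget hZ = tZ, forget h₁ = t₁, such that the list [hS, h₀, hZ, h₁] is grammatical for s and h₀ (z₀, ε) = 1 and h₁ (z₁, !ε) = 1; and (ii) every quadruple (hS, h₀, hZ, h₁) of functional signed multisets with these images under forget whose list is grammatical for s satisfies h₀ (z₀, false) + h₁ (z₁, false) = 1, i.e. z₀ in h₀ and z₁ in h₁ carry opposite exponents. -/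

import Mathlib

/-- The positive part of a signed multiset: `posPart μ a = μ (a, false)`. -/
noncomputable def posPart {α : Type*} (μ : α × Bool →₀ ℕ) : α →₀ ℕ :=
  Finsupp.comapDomain (fun a => (a, false)) μ (fun _ _ _ _ h => congrArg Prod.fst h)

/-- The negative part of a signed multiset: `negPart μ a = μ (a, true)`. -/
noncomputable def negPart {α : Type*} (μ : α × Bool →₀ ℕ) : α →₀ ℕ :=
  Finsupp.comapDomain (fun a => (a, true)) μ (fun _ _ _ _ h => congrArg Prod.fst h)

/-- Forgetting the signs: `forget μ a = μ (a, false) + μ (a, true)`. -/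
noncomputable def forget {α : Type*} (μ : α × Bool →₀ ℕ) : α →₀ ℕ :=
  posPart μ + negPart μ

/-- The signed sum: `sgn μ a = (μ (a, false) : ℤ) − (μ (a, true) : ℤ)`. -/
noncomputable def sgn {α : Type*} (μ : α × Bool →₀ ℕ) : α →₀ ℤ :=
  (posPart μ).mapRange (Nat.cast : ℕ → ℤ) Nat.cast_zero
    - (negPart μ).mapRange (Nat.cast : ℕ → ℤ) Nat.cast_zero

/-- A signed multiset is functional if it is a single generator, or it has at least one
occurrence with exponent `+1` and at least one with exponent `−1`. -/
def Functional {α : Type*} (μ : α × Bool →₀ ℕ) : Prop :=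
  (∃ a : α, μ = Finsupp.single (a, false) 1) ∨
    (∃ a b : α, 0 < μ (a, false) ∧ 0 < μ (b, true))

/-- A list of signed multisets is grammatical for `s` if the signed sums of its entries
add up to `Finsupp.single s 1`. -/
noncomputable def Grammatical {α : Type*} (s : α) (l : List (α × Bool →₀ ℕ)) : Prop :=
  (l.map sgn).sum = Finsupp.single s 1


lemma forget_apply {α : Type*} (μ : α × Bool →₀ ℕ) (a : α) :
    forget μ a = μ (a, false) + μ (a, true) := by
  simp [forget, _root_.posPart, _root_.negPart]
  rfl

lemma sgn_apply {α : Type*} (μ : α × Bool →₀ ℕ) (a : α) :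
    sgn μ a = (μ (a, false) : ℤ) - μ (a, true) := by
  simp [sgn, _root_.posPart, _root_.negPart]
  rfl

/-- The negation sentence `(S,s) (X⁰,t₀) (Z,tZ) (X¹,t₁)` forces opposite exponents:
(i) for each `ε : Bool` there is a solution with `h₀ (z₀, ε) = 1` and `h₁ (z₁, !ε) = 1`;
(ii) every solution satisfies `h₀ (z₀, false) + h₁ (z₁, false) = 1`, i.e. `z₀` in `h₀`
and `z₁` in `h₁` carry opposite exponents. -/
theorem negation_sentence {α : Type*} (s z₀ z₁ y₀ y₁ : α)
    (hdist : List.Pairwise (· ≠ ·) [s, z₀, z₁, y₀, y₁]) :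
    (∀ ε : Bool, ∃ hS h₀ hZ h₁ : α × Bool →₀ ℕ,
      Functional hS ∧ Functional h₀ ∧ Functional hZ ∧ Functional h₁ ∧
      forget hS = Finsupp.single s 1 ∧
      forget h₀ = Finsupp.single z₀ 1 + 2 • Finsupp.single y₀ 1 ∧
      forget hZ = Finsupp.single z₀ 1 + Finsupp.single z₁ 1 ∧
      forget h₁ = Finsupp.single z₁ 1 + 2 • Finsupp.single y₁ 1 ∧
      Grammatical s [hS, h₀, hZ, h₁] ∧
      h₀ (z₀, ε) = 1 ∧ h₁ (z₁, !ε) = 1) ∧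
    (∀ hS h₀ hZ h₁ : α × Bool →₀ ℕ,
      Functional hS → Functional h₀ → Functional hZ → Functional h₁ →
      forget hS = Finsupp.single s 1 →
      forget h₀ = Finsupp.single z₀ 1 + 2 • Finsupp.single y₀ 1 →
      forget hZ = Finsupp.single z₀ 1 + Finsupp.single z₁ 1 →
      forget h₁ = Finsupp.single z₁ 1 + 2 • Finsupp.single y₁ 1 →
      Grammatical s [hS, h₀, hZ, h₁] →
      h₀ (z₀, false) + h₁ (z₁, false) = 1) := by
  classical
  obtain ⟨⟨h1,h2,h3,h4⟩,⟨h5,h6,h7⟩,⟨h8,h9⟩,h10⟩ :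
      ((s ≠ z₀ ∧ s ≠ z₁ ∧ s ≠ y₀ ∧ s ≠ y₁) ∧ (z₀ ≠ z₁ ∧ z₀ ≠ y₀ ∧ z₀ ≠ y₁) ∧
        (z₁ ≠ y₀ ∧ z₁ ≠ y₁) ∧ y₀ ≠ y₁) := by
    simp [List.pairwise_cons] at hdist
    tauto
  constructor
  · intro ε
    refine ⟨Finsupp.single (s, false) 1,
      Finsupp.single (z₀, ε) 1 + Finsupp.single (y₀, false) 1 + Finsupp.single (y₀, true) 1,
      Finsupp.single (z₀, !ε) 1 + Finsupp.single (z₁, ε) 1,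
      Finsupp.single (z₁, !ε) 1 + Finsupp.single (y₁, false) 1 + Finsupp.single (y₁, true) 1,
      Or.inl ⟨s, rfl⟩, ?_, ?_, ?_, ?_, ?_, ?_, ?_, ?_, ?_, ?_⟩
    · exact Or.inr ⟨y₀, y₀, by
        cases ε <;> simp [Finsupp.single_apply, Prod.ext_iff, h6.symm, Ne.symm h6]⟩
    · refine Or.inr ?_
      cases ε
      · exact ⟨z₁, z₀, by simp [Finsupp.single_apply, Prod.ext_iff, h5]⟩
      · exact ⟨z₀, z₁, by simp [Finsupp.single_apply, Prod.ext_iff, h5.symm, Ne.symm h5]⟩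
    · exact Or.inr ⟨y₁, y₁, by
        cases ε <;> simp [Finsupp.single_apply, Prod.ext_iff, h7.symm, Ne.symm h7]⟩
    · ext a
      rw [forget_apply]
      cases ε <;> simp [Finsupp.single_apply, Prod.ext_iff] <;> split_ifs <;> simp_all <;> omega
    · ext a
      rw [forget_apply]
      cases ε <;> simp [Finsupp.single_apply, Prod.ext_iff] <;> split_ifs <;> simp_all <;> omega
    · ext a
      rw [forget_apply]
      cases ε <;> simp [Finsupp.single_apply, Prod.ext_iff] <;> split_ifs <;> simp_all <;> omega
    · ext a
      rw [forget_apply]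
      cases ε <;> simp [Finsupp.single_apply, Prod.ext_iff] <;> split_ifs <;> simp_all <;> omega
    · unfold Grammatical
      ext a
      simp only [List.map_cons, List.map_nil, List.sum_cons, List.sum_nil, add_zero,
        Finsupp.add_apply, sgn_apply]
      cases ε <;> simp [Finsupp.single_apply, Prod.ext_iff] <;> split_ifs <;> simp_all <;> omega
    · cases ε <;> simp [Finsupp.single_apply, Prod.ext_iff, Ne.symm h6]
    · cases ε <;> simp [Finsupp.single_apply, Prod.ext_iff, Ne.symm h9]
  · intro hS h₀ hZ h₁ _ _ fZ _ ffS ff₀ ffZ ff₁ gram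
    -- pointwise forget equalities
    have FS : ∀ a, hS (a,false) + hS (a,true) = (Finsupp.single s 1 : α →₀ ℕ) a := fun a => by
      rw [← forget_apply, ffS]
    have F0 : ∀ a, h₀ (a,false) + h₀ (a,true)
        = (Finsupp.single z₀ 1 + 2 • Finsupp.single y₀ 1 : α →₀ ℕ) a := fun a => by
      rw [← forget_apply, ff₀]
    have FZ : ∀ a, hZ (a,false) + hZ (a,true)
        = (Finsupp.single z₀ 1 + Finsupp.single z₁ 1 : α →₀ ℕ) a := fun a => by
      rw [← forget_apply, ffZ]
    have F1 : ∀ a, h₁ (a,false) + h₁ (a,true)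
        = (Finsupp.single z₁ 1 + 2 • Finsupp.single y₁ 1 : α →₀ ℕ) a := fun a => by
      rw [← forget_apply, ff₁]
    have eS0 : hS (z₀,false) + hS (z₀,true) = 0 := by
      have := FS z₀; simpa [Finsupp.single_apply, h1] using this
    have eS1 : hS (z₁,false) + hS (z₁,true) = 0 := by
      have := FS z₁; simpa [Finsupp.single_apply, h2] using this
    have e00 : h₀ (z₀,false) + h₀ (z₀,true) = 1 := by
      have := F0 z₀; simpa [Finsupp.single_apply, Ne.symm h6] using this
    have e01 : h₀ (z₁,false) + h₀ (z₁,true) = 0 := by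
      have := F0 z₁; simpa [Finsupp.single_apply, h5, Ne.symm h8] using this
    have eZ0 : hZ (z₀,false) + hZ (z₀,true) = 1 := by
      have := FZ z₀; simpa [Finsupp.single_apply, Ne.symm h5] using this
    have eZ1 : hZ (z₁,false) + hZ (z₁,true) = 1 := by
      have := FZ z₁; simpa [Finsupp.single_apply, h5] using this
    have e10 : h₁ (z₀,false) + h₁ (z₀,true) = 0 := by
      have := F1 z₀; simpa [Finsupp.single_apply, Ne.symm h5, Ne.symm h7] using this
    have e11 : h₁ (z₁,false) + h₁ (z₁,true) = 1 := by
      have := F1 z₁; simpa [Finsupp.single_apply, Ne.symm h9] using this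
    -- grammatical evaluated at z₀, z₁
    simp only [Grammatical, List.map_cons, List.map_nil, List.sum_cons, List.sum_nil,
      add_zero] at gram
    have g0 := congrArg (fun f => f z₀) gram
    have g1 := congrArg (fun f => f z₁) gram
    simp only [Finsupp.add_apply, sgn_apply, Finsupp.single_apply,
      if_neg h1, if_neg h2] at g0 g1
    -- functionality of hZ forces q₀ + q₁ = 1
    have hq : hZ (z₀,false) + hZ (z₁,false) = 1 := by
      rcases fZ with ⟨a, ha⟩ | ⟨a, b, hpa, hpb⟩
      · exfalso
        have ha0 : hZ (z₀,true) = 0 := by subst ha; simp [Finsupp.single_apply]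
        have ha1 : hZ (z₁,true) = 0 := by subst ha; simp [Finsupp.single_apply]
        have c0 : hZ (z₀,false) = 1 := by omega
        have c1 : hZ (z₁,false) = 1 := by omega
        rw [ha] at c0 c1
        have ea0 : a = z₀ := by
          by_contra h
          simp [Finsupp.single_apply, Prod.ext_iff, h] at c0
        have ea1 : a = z₁ := by
          by_contra h
          simp [Finsupp.single_apply, Prod.ext_iff, h] at c1
        exact h5 (ea0 ▸ ea1)
      · have haz : a = z₀ ∨ a = z₁ := by
          by_contra hc
          push_neg at hc
          have := FZ a
          rw [Finsupp.add_apply, Finsupp.single_apply, Finsupp.single_apply,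
            if_neg (fun h => hc.1 h.symm), if_neg (fun h => hc.2 h.symm)] at this
          omega
        have hbz : b = z₀ ∨ b = z₁ := by
          by_contra hc
          push_neg at hc
          have := FZ b
          rw [Finsupp.add_apply, Finsupp.single_apply, Finsupp.single_apply,
            if_neg (fun h => hc.1 h.symm), if_neg (fun h => hc.2 h.symm)] at this
          omega
        rcases haz with rfl | rfl <;> rcases hbz with rfl | rfl <;> omega
    omega
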